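/- Let x ∈ s with G(x) > 0, let v* ∈ s be a minimizer over s of v ↦ ⟨∇f(x), v⟩ + g(v), set d := v* − x (note d ≠ 0), and let L₀ > 0. For each i ∈ ℕ define L^{(i)} := 2^{i−1} L₀ and τ^{(i)} := min{1, G(x)/(2 L^{(i)} ‖d‖²)}. Then there exists N ∈ ℕ such that for all integers i ≥ N, F(x + τ^{(i)} d) ≤ F(x) − (1/2) τ^{(i)} G(x) + (1/2) L^{(i)} (τ^{(i)})² ‖d‖²; in particular, the backtracking linesearch of the parameter-free generalized conditional gradient method terminates in a finite number of steps. -/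

import Mathlib

open scoped RealInnerProductSpace

/-- The Frank–Wolfe gap `G(x) = sup_{v ∈ s} (⟪∇f(x), x − v⟫ + g(x) − g(v))`. -/
noncomputable def FWgap {E : Type*} [NormedAddCommGroup E] [InnerProductSpace ℝ E] [CompleteSpace E]
    (f g : E → ℝ) (s : Set E) (x : E) : ℝ :=
  ⨆ v : s, (⟪gradient f x, x - (v : E)⟫ + g x - g (v : E))


/-- Candidate Lipschitz estimate `L^{(i)} = 2^{i−1} · L_prev`. -/
noncomputable def Lcand (Lprev : ℝ) (i : ℕ) : ℝ := 2 ^ i * Lprev / 2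

/-- Candidate stepsize `τ^{(i)} = min {1, G / (2 L^{(i)} ‖d‖²)}`. -/
noncomputable def tauCand (Gx Lprev nd2 : ℝ) (i : ℕ) : ℝ :=
  min 1 (Gx / (2 * Lcand Lprev i * nd2))

/-- **Lemma: well-definedness of the linesearch in Algorithm 2.**
Let `x ∈ s` with `G(x) > 0`, let `v* ∈ s` minimize `v ↦ ⟪∇f(x), v⟫ + g v` over `s`,
set `d := v* − x`, and let `L₀ > 0`. With `L^{(i)} = 2^{i−1} L₀` and
`τ^{(i)} = min {1, G(x)/(2 L^{(i)} ‖d‖²)}`, there exists `N` such that for all `i ≥ N`,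
`F(x + τ^{(i)} d) ≤ F(x) − (1/2) τ^{(i)} G(x) + (1/2) L^{(i)} (τ^{(i)})² ‖d‖²`. -/
theorem parameter_free_linesearch_terminates
    {E : Type*} [NormedAddCommGroup E] [InnerProductSpace ℝ E] [FiniteDimensional ℝ E]
    (s : Set E) (hs_ne : s.Nonempty) (hs_cl : IsClosed s) (hs_cv : Convex ℝ s)
    (g : E → ℝ) (hg_cv : ConvexOn ℝ s g) (hg_lsc : LowerSemicontinuousOn g s)
    (hg_sc : ∀ M : ℝ, ∃ R : ℝ, ∀ z ∈ s, R ≤ ‖z‖ → M ≤ g z / ‖z‖)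
    (f : E → ℝ) (hf : ∃ u : Set E, IsOpen u ∧ s ⊆ u ∧ ContDiffOn ℝ 1 f u)
    (hF_bdd : BddBelow ((fun z => f z + g z) '' s))
    (x : E) (hx : x ∈ s) (hGpos : 0 < FWgap f g s x)
    (vstar : E) (hvstar : vstar ∈ s)
    (hmin : ∀ w ∈ s, ⟪gradient f x, vstar⟫ + g vstar ≤ ⟪gradient f x, w⟫ + g w)
    (d : E) (hd : d = vstar - x)
    (L₀ : ℝ) (hL₀ : 0 < L₀) :
    ∃ N : ℕ, ∀ i : ℕ, N ≤ i →
      f (x + tauCand (FWgap f g s x) L₀ (‖d‖ ^ 2) i • d)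
        + g (x + tauCand (FWgap f g s x) L₀ (‖d‖ ^ 2) i • d)
      ≤ (f x + g x) - (1 / 2) * tauCand (FWgap f g s x) L₀ (‖d‖ ^ 2) i * FWgap f g s x
        + (1 / 2) * Lcand L₀ i * (tauCand (FWgap f g s x) L₀ (‖d‖ ^ 2) i) ^ 2 * ‖d‖ ^ 2 := by
  obtain ⟨u, hu_open, hsu, hcd⟩ := hf
  haveI : Nonempty s := ⟨⟨x, hx⟩⟩
  set G := FWgap f g s x with hG
  set nd2 := ‖d‖ ^ 2 with hnd2
  -- the sup is attained at vstar
  have hub : ∀ v : s, ⟪gradient f x, x - (v : E)⟫ + g x - g (v : E)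
      ≤ ⟪gradient f x, x - vstar⟫ + g x - g vstar := by
    intro v
    have h := hmin v v.2
    simp only [inner_sub_right] at *
    linarith
  have hGeq : G = ⟪gradient f x, x - vstar⟫ + g x - g vstar := by
    apply le_antisymm
    · exact ciSup_le hub
    · exact le_ciSup ⟨_, by rintro y ⟨v, rfl⟩; exact hub v⟩ (⟨vstar, hvstar⟩ : s)
  -- d ≠ 0
  have hdne : d ≠ 0 := by
    intro h0
    have hvx : vstar = x := by
      have := hd.symm.trans h0
      rwa [sub_eq_zero] at this
    rw [hGeq, hvx] at hGpos
    simp at hGpos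
  have hnd2pos : 0 < nd2 := by
    rw [hnd2]
    exact pow_pos (norm_pos_iff.mpr hdne) 2
  -- derivative along the segment
  have hfd : DifferentiableAt ℝ f x :=
    (hcd.contDiffAt (hu_open.mem_nhds (hsu hx))).differentiableAt one_ne_zero
  set c' : ℝ := ⟪gradient f x, d⟫ with hc'
  have hc'G : c' = -G + g x - g vstar := by
    rw [hc', hGeq, hd]
    have : ⟪gradient f x, x - vstar⟫ = -⟪gradient f x, vstar - x⟫ := by
      rw [← inner_neg_right, neg_sub]
    rw [this]
    ring
  have hline : HasDerivAt (fun t : ℝ => x + t • d) d 0 := by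
    simpa using ((hasDerivAt_id (0 : ℝ)).smul_const d).const_add x
  have hφ : HasDerivAt (fun t : ℝ => f (x + t • d)) c' 0 := by
    have h1 : HasFDerivAt f (InnerProductSpace.toDual ℝ E (gradient f x)) x :=
      hfd.hasGradientAt.hasFDerivAt
    have h2 : HasFDerivAt f (InnerProductSpace.toDual ℝ E (gradient f x))
        ((fun t : ℝ => x + t • d) 0) := by simpa using h1
    have := h2.comp_hasDerivAt 0 hline
    rw [InnerProductSpace.toDual_apply_apply] at this
    exact this
  -- little-o bound
  have hlo := Asymptotics.isLittleO_iff.mp (hasDerivAt_iff_isLittleO.mp hφ) (half_pos hGpos)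
  rw [Metric.eventually_nhds_iff] at hlo
  obtain ⟨δ, hδpos, hball⟩ := hlo
  -- choose N
  obtain ⟨N, hN⟩ := pow_unbounded_of_one_lt (G / (L₀ * nd2 * δ)) (by norm_num : (1:ℝ) < 2)
  refine ⟨N, fun i hi => ?_⟩
  set τ := tauCand G L₀ nd2 i with hτ
  have hLpos : 0 < Lcand L₀ i := by
    rw [Lcand]; positivity
  have hpow : G / (L₀ * nd2 * δ) < 2 ^ i :=
    hN.trans_le (pow_le_pow_right₀ (by norm_num) hi)
  have hfrac : G / (2 * Lcand L₀ i * nd2) < δ := by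
    rw [div_lt_iff₀ (by positivity)]
    rw [div_lt_iff₀ (by positivity)] at hpow
    have h2 : (2 : ℝ) * Lcand L₀ i * nd2 = 2 ^ i * L₀ * nd2 := by
      rw [Lcand]; ring
    nlinarith
  have hτpos : 0 < τ := by
    rw [hτ, tauCand]
    exact lt_min one_pos (by positivity)
  have hτle1 : τ ≤ 1 := min_le_left _ _
  have hτδ : τ < δ := lt_of_le_of_lt (min_le_right _ _) hfrac
  -- f bound
  have hf_bound : f (x + τ • d) ≤ f x + τ * c' + G / 2 * τ := by
    have hb := hball (y := τ) (by simpa [Real.dist_eq, abs_of_pos hτpos] using hτδ)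
    simp only [sub_zero, zero_smul, add_zero, smul_eq_mul, Real.norm_eq_abs] at hb
    have h1 : f (x + τ • d) - f x - τ * c' ≤ |f (x + τ • d) - f x - τ * c'| := le_abs_self _
    rw [abs_of_pos hτpos] at hb
    linarith
  -- g bound
  have hseg : x + τ • d = (1 - τ) • x + τ • vstar := by
    rw [hd, smul_sub, sub_smul, one_smul]
    abel
  have hg_bound : g (x + τ • d) ≤ (1 - τ) * g x + τ * g vstar := by
    rw [hseg]
    exact hg_cv.2 hx hvstar (by linarith) hτpos.le (by ring)
  have hquad : 0 ≤ 1 / 2 * Lcand L₀ i * τ ^ 2 * nd2 := by positivity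
  have hgoal : f (x + τ • d) + g (x + τ • d)
      ≤ (f x + g x) - 1 / 2 * τ * G + 1 / 2 * Lcand L₀ i * τ ^ 2 * nd2 := by
    nlinarith [hf_bound, hg_bound, hc'G]
  exact hgoal
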